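/- (Theorem 3.2 (iii), ambient-metric version) Assume G is conserved by X, and let φ : ℝ → E → E be a flow of the geometrically dissipated system, i.e. φ(0, x) = x and φ(s + t, x) = φ(s, φ(t, x)) for all s, t ∈ ℝ and x ∈ E, and for every x ∈ E the curve t ↦ φ(t, x) is continuous in (t,x) and differentiable in t with derivative X(φ(t,x)) − v₀(φ(t,x)). Let x₀ ∈ E and suppose the forward orbit {φ(t, x₀) : t ≥ 0} is bounded. Then the ω-limit set ω(x₀) := {z ∈ E : there exist t₁ < t₂ < ⋯ → +∞ with φ(tₙ, x₀) → z} is nonempty and compact, and the distance (induced by the norm of E) from φ(t, x₀) to the set Inv tends to 0 as t → +∞. -/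

import Mathlib

open scoped RealInnerProductSpace BigOperators
open Filter Topology

/-- `Σ^{(a₁,…,a_r)}_{(b₁,…,b_s)}`: the `r × s` real matrix whose `(i,j)` entry is `⟪b j, a i⟫`. -/
noncomputable def sigmaMat {E : Type*} [NormedAddCommGroup E] [InnerProductSpace ℝ E]
    {r s : ℕ} (a : Fin r → E) (b : Fin s → E) : Matrix (Fin r) (Fin s) ℝ :=
  Matrix.of fun i j => ⟪b j, a i⟫

/-- The standard control vector `v₀(w₁,…,w_{k+1},u)`: there are `k+1` vectors `w`
(`k+1 ≥ 1` encodes the requirement that the number of `w`-vectors is at least one).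
With `0`-indexing, the sign `(-1)^(i+k+1)` below is the paper's `(-1)^{i+k+1}` for
`1`-indexed `i` and `k+1` vectors. -/
noncomputable def stdControl {E : Type*} [NormedAddCommGroup E] [InnerProductSpace ℝ E]
    {k : ℕ} (w : Fin (k + 1) → E) (u : E) : E :=
  (∑ i : Fin (k + 1),
      ((-1 : ℝ) ^ ((i : ℕ) + k + 1) *
        (sigmaMat w (Fin.snoc (w ∘ i.succAbove) u)).det) • w i) +
    (sigmaMat w w).det • u

/-- The family of gradients `(∇F₁(x),…,∇F_{k+1}(x),∇G(x))`. -/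
noncomputable def gradFam {E : Type*} [NormedAddCommGroup E] [InnerProductSpace ℝ E]
    [FiniteDimensional ℝ E] {k : ℕ} (F : Fin (k + 1) → E → ℝ) (G : E → ℝ) (x : E) :
    Fin (k + 1 + 1) → E :=
  Fin.snoc (fun i => gradient (F i) x) (gradient G x)

/-- The standard control vector field `x ↦ v₀(∇F₁(x),…,∇F_{k+1}(x),∇G(x))`. -/
noncomputable def v0Field {E : Type*} [NormedAddCommGroup E] [InnerProductSpace ℝ E]
    [FiniteDimensional ℝ E] {k : ℕ} (F : Fin (k + 1) → E → ℝ) (G : E → ℝ) (x : E) : E :=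
  stdControl (fun i => gradient (F i) x) (gradient G x)

/-- `det Σ^{(∇F₁(x),…,∇F_{k+1}(x),∇G(x))}_{(∇F₁(x),…,∇F_{k+1}(x),∇G(x))}`. -/
noncomputable def gramDetFG {E : Type*} [NormedAddCommGroup E] [InnerProductSpace ℝ E]
    [FiniteDimensional ℝ E] {k : ℕ} (F : Fin (k + 1) → E → ℝ) (G : E → ℝ) (x : E) : ℝ :=
  (sigmaMat (gradFam F G x) (gradFam F G x)).det

/-- The set `Inv = {x | det Σ^{(∇F(x),∇G(x))}_{(∇F(x),∇G(x))} = 0}`. -/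
def invSet {E : Type*} [NormedAddCommGroup E] [InnerProductSpace ℝ E]
    [FiniteDimensional ℝ E] {k : ℕ} (F : Fin (k + 1) → E → ℝ) (G : E → ℝ) : Set E :=
  {x | gramDetFG F G x = 0}

section Aux

variable {E : Type*} [NormedAddCommGroup E] [InnerProductSpace ℝ E]

/-- Gram matrices are positive semidefinite. -/
lemma sigmaMat_posSemidef {n : ℕ} (b : Fin n → E) : (sigmaMat b b).PosSemidef := by
  refine Matrix.PosSemidef.of_dotProduct_mulVec_nonneg ?_ ?_
  · ext i j
    simp [sigmaMat, Matrix.conjTranspose_apply, real_inner_comm]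
  · intro x
    have key : dotProduct (star x) ((sigmaMat b b).mulVec x)
        = ⟪∑ j, x j • b j, ∑ i, x i • b i⟫ := by
      simp only [dotProduct, Matrix.mulVec, sigmaMat, Matrix.of_apply, Pi.star_apply,
        star_trivial, inner_sum, sum_inner, real_inner_smul_left, real_inner_smul_right]
      refine Finset.sum_congr rfl fun i _ => ?_
      rw [Finset.mul_sum]
      exact Finset.sum_congr rfl fun j _ => by ring
    rw [key]
    exact real_inner_self_nonneg

/-- Determinants of real positive semidefinite matrices are nonnegative. -/
lemma posSemidef_det_nonneg {n : ℕ} {A : Matrix (Fin n) (Fin n) ℝ} (hA : A.PosSemidef) :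
    0 ≤ A.det := by
  rw [hA.isHermitian.det_eq_prod_eigenvalues]
  exact Finset.prod_nonneg fun i _ => hA.eigenvalues_nonneg i

lemma snoc_succAbove_castSucc {α : Type*} {k : ℕ} (w : Fin (k + 1) → α) (u : α)
    (i : Fin (k + 1)) (c : Fin (k + 1)) :
    (Fin.snoc w u : Fin (k + 2) → α) ((Fin.castSucc i).succAbove c)
      = (Fin.snoc (w ∘ i.succAbove) u : Fin (k + 1) → α) c := by
  refine Fin.lastCases ?_ ?_ c
  · have h1 : (Fin.castSucc i).succAbove (Fin.last k) = Fin.last (k + 1) := by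
      rw [Fin.succAbove_of_le_castSucc _ _ (Fin.castSucc_le_castSucc_iff.2 (Fin.le_last i)),
        Fin.succ_last]
    rw [h1, Fin.snoc_last, Fin.snoc_last]
  · intro c'
    rw [Fin.castSucc_succAbove_castSucc, Fin.snoc_castSucc, Fin.snoc_castSucc]
    rfl

/-- Laplace expansion of the `(k+2) × (k+2)` Gram determinant along its last row gives
the inner product of `u` with the standard control vector. -/
lemma inner_stdControl {k : ℕ} (w : Fin (k + 1) → E) (u : E) :
    ⟪u, stdControl w u⟫ = (sigmaMat (Fin.snoc w u) (Fin.snoc w u)).det := by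
  have hsub : ∀ i : Fin (k + 1),
      (sigmaMat (Fin.snoc w u) (Fin.snoc w u)).submatrix
        (Fin.last (k + 1)).succAbove (Fin.castSucc i).succAbove
        = sigmaMat w (Fin.snoc (w ∘ i.succAbove) u) := by
    intro i
    ext r c
    simp only [Matrix.submatrix_apply, sigmaMat, Matrix.of_apply, Fin.succAbove_last_apply,
      Fin.snoc_castSucc, snoc_succAbove_castSucc]
  have hsub_last :
      (sigmaMat (Fin.snoc w u) (Fin.snoc w u)).submatrix
        (Fin.last (k + 1)).succAbove (Fin.last (k + 1)).succAbove
        = sigmaMat w w := by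
    ext r c
    simp only [Matrix.submatrix_apply, sigmaMat, Matrix.of_apply, Fin.succAbove_last_apply,
      Fin.snoc_castSucc]
  rw [Matrix.det_succ_row _ (Fin.last (k + 1)), Fin.sum_univ_castSucc]
  rw [stdControl, inner_add_right, inner_sum, real_inner_smul_right]
  congr 1
  · refine Finset.sum_congr rfl fun i _ => ?_
    rw [hsub i, real_inner_smul_right]
    have hM : sigmaMat (Fin.snoc w u) (Fin.snoc w u) (Fin.last (k + 1)) (Fin.castSucc i)
        = ⟪w i, u⟫ := by
      simp [sigmaMat]
    rw [hM, real_inner_comm u (w i)]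
    rw [show ((Fin.last (k + 1) : Fin (k + 2)) : ℕ) + ((Fin.castSucc i : Fin (k + 2)) : ℕ)
        = (i : ℕ) + k + 1 by simp [Fin.val_last]; omega]
    ring
  · have hM : sigmaMat (Fin.snoc w u) (Fin.snoc w u) (Fin.last (k + 1)) (Fin.last (k + 1))
        = ⟪u, u⟫ := by
      simp [sigmaMat]
    rw [hsub_last, hM]
    have h1 : ((-1 : ℝ)) ^ (((Fin.last (k + 1) : Fin (k + 2)) : ℕ)
        + ((Fin.last (k + 1) : Fin (k + 2)) : ℕ)) = 1 :=
      Even.neg_one_pow ⟨(Fin.last (k + 1) : Fin (k + 2)).val, rfl⟩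
    rw [h1]
    ring

lemma inner_gradient_v0Field [FiniteDimensional ℝ E] {k : ℕ}
    (F : Fin (k + 1) → E → ℝ) (G : E → ℝ) (x : E) :
    ⟪gradient G x, v0Field F G x⟫ = gramDetFG F G x :=
  inner_stdControl (fun i => gradient (F i) x) (gradient G x)

private lemma exists_strictMono_of_forall_exists {P : ℕ → ℝ → Prop}
    (h : ∀ (n : ℕ) (T : ℝ), ∃ t, T ≤ t ∧ P n t) :
    ∃ u : ℕ → ℝ, StrictMono u ∧ Tendsto u atTop atTop ∧ ∀ n, P n (u n) := by
  choose f hf hP using h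
  let u : ℕ → ℝ := fun n =>
    Nat.rec (f 0 0) (fun m prev => f (m + 1) (max (prev + 1) ((m : ℝ) + 1))) n
  have hsucc : ∀ n, u (n + 1) = f (n + 1) (max (u n + 1) ((n : ℝ) + 1)) := fun n => rfl
  have hstep : ∀ n, u n + 1 ≤ u (n + 1) := by
    intro n
    rw [hsucc]
    exact le_trans (le_max_left _ _) (hf (n + 1) _)
  have hmono : StrictMono u := strictMono_nat_of_lt_succ fun n => by
    have := hstep n; linarith
  have hge : ∀ n : ℕ, (n : ℝ) ≤ u n := by
    intro n
    cases n with
    | zero => show ((0:ℕ):ℝ) ≤ f 0 0; simpa using hf 0 0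
    | succ m =>
      rw [hsucc]
      refine le_trans ?_ (hf (m + 1) _)
      push_cast
      exact le_max_right _ _
  refine ⟨u, hmono, tendsto_atTop_mono hge tendsto_natCast_atTop_atTop, fun n => ?_⟩
  cases n with
  | zero => exact hP 0 0
  | succ m => rw [hsucc]; exact hP (m + 1) _

end Aux

/-- Theorem 3.2 (iii), ambient-metric version: for a (jointly continuous) flow
of the geometrically dissipated system with bounded forward orbit, the ω-limit set is nonempty
and compact, and the distance from the solution to `Inv` tends to `0` as `t → +∞`. -/
theorem omegaLimit_compact_and_dist_to_inv_tendsto_zero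
    {E : Type*} [NormedAddCommGroup E] [InnerProductSpace ℝ E]
    [FiniteDimensional ℝ E] {k : ℕ} (F : Fin (k + 1) → E → ℝ) (G : E → ℝ) (X : E → E)
    (hF : ∀ i, ContDiff ℝ 1 (F i)) (hG : ContDiff ℝ 1 G)
    (hcons : ∀ y : E, ⟪gradient G y, X y⟫ = 0)
    (φ : ℝ → E → E)
    (hφ0 : ∀ x : E, φ 0 x = x)
    (hφadd : ∀ (s t : ℝ) (x : E), φ (s + t) x = φ s (φ t x))
    (hφcont : Continuous fun p : ℝ × E => φ p.1 p.2)
    (hφderiv : ∀ (x : E) (t : ℝ),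
      HasDerivAt (fun τ => φ τ x) (X (φ t x) - v0Field F G (φ t x)) t)
    (x₀ : E) (hbdd : Bornology.IsBounded {y : E | ∃ t : ℝ, 0 ≤ t ∧ φ t x₀ = y}) :
    ({z : E | ∃ t : ℕ → ℝ, StrictMono t ∧ Tendsto t atTop atTop ∧
        Tendsto (fun n => φ (t n) x₀) atTop (𝓝 z)}).Nonempty ∧
    IsCompact {z : E | ∃ t : ℕ → ℝ, StrictMono t ∧ Tendsto t atTop atTop ∧
        Tendsto (fun n => φ (t n) x₀) atTop (𝓝 z)} ∧
    Tendsto (fun t : ℝ => Metric.infDist (φ t x₀) (invSet F G)) atTop (𝓝 0) := by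
  classical
  set Ω := {z : E | ∃ t : ℕ → ℝ, StrictMono t ∧ Tendsto t atTop atTop ∧
      Tendsto (fun n => φ (t n) x₀) atTop (𝓝 z)} with hΩdef
  have horb : ∀ t : ℝ, 0 ≤ t → φ t x₀ ∈ {y : E | ∃ t : ℝ, 0 ≤ t ∧ φ t x₀ = y} :=
    fun t ht => ⟨t, ht, rfl⟩
  set K := closure {y : E | ∃ t : ℝ, 0 ≤ t ∧ φ t x₀ = y} with hKdef
  have hK : IsCompact K := hbdd.isCompact_closure
  have hKmem : ∀ t : ℝ, 0 ≤ t → φ t x₀ ∈ K := fun t ht => subset_closure (horb t ht)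
  have hne : Ω.Nonempty := by
    obtain ⟨z, hzK, s, hs, hconv⟩ :=
      hK.tendsto_subseq (x := fun n : ℕ => φ (n : ℝ) x₀)
        (fun n => hKmem _ (Nat.cast_nonneg n))
    exact ⟨z, fun n => ((s n : ℕ) : ℝ), fun a b h => Nat.cast_lt.2 (hs h),
      tendsto_natCast_atTop_atTop.comp hs.tendsto_atTop, hconv⟩
  have hΩK : Ω ⊆ K := by
    rintro z ⟨t, ht1, ht2, ht3⟩
    refine mem_closure_of_tendsto ht3 ?_
    filter_upwards [ht2.eventually_ge_atTop 0] with n hn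
    exact horb (t n) hn
  have hmem : ∀ z : E,
      (∀ (n : ℕ) (T : ℝ), ∃ t, T ≤ t ∧ dist (φ t x₀) z < 1 / ((n : ℝ) + 1)) → z ∈ Ω := by
    intro z hz
    obtain ⟨u, hu1, hu2, hu3⟩ := exists_strictMono_of_forall_exists hz
    refine ⟨u, hu1, hu2, ?_⟩
    rw [tendsto_iff_dist_tendsto_zero]
    exact squeeze_zero (fun n => dist_nonneg) (fun n => (hu3 n).le)
      tendsto_one_div_add_atTop_nhds_zero_nat
  have hclosed : IsClosed Ω := by
    refine isClosed_of_closure_subset fun z hz => ?_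
    refine hmem z fun n T => ?_
    have hpos : (0 : ℝ) < 1 / (2 * ((n : ℝ) + 1)) := by positivity
    obtain ⟨y, hyΩ, hyd⟩ := Metric.mem_closure_iff.1 hz _ hpos
    obtain ⟨t, ht1, ht2, ht3⟩ := hyΩ
    have h1 : ∀ᶠ m in atTop, T ≤ t m := ht2.eventually_ge_atTop T
    have h2 : ∀ᶠ m in atTop, dist (φ (t m) x₀) y < 1 / (2 * ((n : ℝ) + 1)) :=
      (Metric.tendsto_nhds.1 ht3) _ hpos
    obtain ⟨m, hm1, hm2⟩ := (h1.and h2).exists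
    refine ⟨t m, hm1, ?_⟩
    have h3 : dist y z < 1 / (2 * ((n : ℝ) + 1)) := by rwa [dist_comm]
    have h4 : (0 : ℝ) < (n : ℝ) + 1 := by positivity
    have h5 : 1 / (2 * ((n : ℝ) + 1)) + 1 / (2 * ((n : ℝ) + 1)) = 1 / ((n : ℝ) + 1) := by
      field_simp
      norm_num
    linarith [dist_triangle (φ (t m) x₀) y z]
  have hcompact : IsCompact Ω := hK.of_isClosed_subset hclosed hΩK
  have hdet_nonneg : ∀ x : E, 0 ≤ gramDetFG F G x := fun x =>
    posSemidef_det_nonneg (sigmaMat_posSemidef _)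
  have hkey : ∀ (x : E) (t : ℝ),
      HasDerivAt (fun τ => G (φ τ x)) (-(gramDetFG F G (φ t x))) t := by
    intro x t
    have hd : DifferentiableAt ℝ G (φ t x) := (hG.differentiable one_ne_zero).differentiableAt
    have hf2 := hd.hasGradientAt.hasFDerivAt
    have h2 := hf2.comp_hasDerivAt t (hφderiv x t)
    refine h2.congr_deriv ?_
    rw [InnerProductSpace.toDual_apply_apply, inner_sub_right, hcons, inner_gradient_v0Field]
    ring
  set g : ℝ → ℝ := fun t => G (φ t x₀) with hgdef
  have hgderiv : ∀ t, HasDerivAt g (-(gramDetFG F G (φ t x₀))) t := hkey x₀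
  have hganti : Antitone g :=
    antitone_of_deriv_nonpos (fun t => (hgderiv t).differentiableAt)
      (fun t => by rw [(hgderiv t).deriv]; exact neg_nonpos.2 (hdet_nonneg _))
  have hx₀K : x₀ ∈ K := by
    have := hKmem 0 le_rfl
    rwa [hφ0] at this
  obtain ⟨ymin, hyminK, hmin⟩ := hK.exists_isMinOn ⟨x₀, hx₀K⟩ hG.continuous.continuousOn
  have hbb : BddBelow (Set.range g) := by
    refine ⟨min (G ymin) (g 0), ?_⟩
    rintro r ⟨t, rfl⟩
    rcases le_total 0 t with ht | ht
    · exact le_trans (min_le_left _ _) (hmin (hKmem t ht))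
    · exact le_trans (min_le_right _ _) (hganti ht)
  have hglim : Tendsto g atTop (𝓝 (⨅ t, g t)) := tendsto_atTop_ciInf hganti hbb
  set c := ⨅ t, g t with hcdef
  have hGc : ∀ z ∈ Ω, G z = c := by
    rintro z ⟨t, ht1, ht2, ht3⟩
    exact tendsto_nhds_unique ((hG.continuous.tendsto z).comp ht3) (hglim.comp ht2)
  have hinvariant : ∀ z ∈ Ω, ∀ s : ℝ, φ s z ∈ Ω := by
    rintro z ⟨t, ht1, ht2, ht3⟩ s
    have hφs : Continuous fun y => φ s y :=
      hφcont.comp (continuous_const.prodMk continuous_id)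
    refine ⟨fun n => s + t n, fun a b h => (add_lt_add_iff_left s).2 (ht1 h),
      tendsto_atTop_add_const_left atTop s ht2, ?_⟩
    have heq : (fun n => φ (s + t n) x₀) = fun n => φ s (φ (t n) x₀) := by
      funext n; exact hφadd s (t n) x₀
    rw [heq]
    exact (hφs.tendsto z).comp ht3
  have hΩinv : Ω ⊆ invSet F G := by
    intro z hz
    have h1 : HasDerivAt (fun s : ℝ => G (φ s z)) (-(gramDetFG F G (φ 0 z))) 0 := hkey z 0
    have h2 : HasDerivAt (fun s : ℝ => G (φ s z)) 0 0 := by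
      have heq : (fun s : ℝ => G (φ s z)) = fun _ => c :=
        funext fun s => hGc _ (hinvariant z hz s)
      rw [heq]
      exact hasDerivAt_const 0 c
    have h3 := h1.unique h2
    rw [hφ0] at h3
    show gramDetFG F G z = 0
    linarith [neg_eq_zero.1 h3]
  have hΩdist : Tendsto (fun t : ℝ => Metric.infDist (φ t x₀) Ω) atTop (𝓝 0) := by
    by_contra hcon
    rw [Metric.tendsto_atTop] at hcon
    push_neg at hcon
    obtain ⟨ε, hε, hfr⟩ := hcon
    have hfr' : ∀ (n : ℕ) (T : ℝ), ∃ t, T ≤ t ∧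
        (0 ≤ t ∧ ε ≤ Metric.infDist (φ t x₀) Ω) := by
      intro n T
      obtain ⟨t, ht, hd⟩ := hfr (max T 0)
      rw [Real.dist_eq, sub_zero, abs_of_nonneg Metric.infDist_nonneg] at hd
      exact ⟨t, le_trans (le_max_left _ _) ht, le_trans (le_max_right _ _) ht, hd⟩
    obtain ⟨u, hu1, hu2, hu3⟩ := exists_strictMono_of_forall_exists hfr'
    obtain ⟨z, hzK, s, hs, hconv⟩ :=
      hK.tendsto_subseq (x := fun n => φ (u n) x₀) (fun n => hKmem _ (hu3 n).1)
    have hzΩ : z ∈ Ω := ⟨u ∘ s, hu1.comp hs, hu2.comp hs.tendsto_atTop, hconv⟩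
    have hdist0 : Metric.infDist z Ω = 0 := Metric.infDist_zero_of_mem hzΩ
    have hle : ε ≤ Metric.infDist z Ω := by
      have hc := ((Metric.continuous_infDist_pt Ω).tendsto z).comp hconv
      exact ge_of_tendsto hc (Eventually.of_forall fun n => (hu3 (s n)).2)
    rw [hdist0] at hle
    linarith
  refine ⟨hne, hcompact, ?_⟩
  exact squeeze_zero (fun t => Metric.infDist_nonneg)
    (fun t => Metric.infDist_le_infDist_of_subset hΩinv hne) hΩdist
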